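/- Let 0 < a < b and 0 < ε < Δ₀, and suppose log(Δ₀/ε) > max{e²/(b − a)², 1/(b − a)}. Then for any integer m ≥ 1 and any positive reals ε₀, …, ε_m satisfying ε₀ ≤ ε/2 and ε_m ≥ Δ₀/2, one has m · ∑_{k=0}^{m−1} ε_{k+1}^a / ε_k^b ≥ (2^{b−a−1} / log(b/a)) · (1/ε^{b−a}) · log(log(Δ₀/ε)). -/

import Mathlib

set_option maxHeartbeats 1000000

private lemma log_ge_one_sub_inv {x : ℝ} (hx : 0 < x) : 1 - 1/x ≤ Real.log x := by
  have h := Real.log_le_sub_one_of_pos (show 0 < x⁻¹ by positivity)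
  rw [Real.log_inv] at h
  have hx' : 1/x = x⁻¹ := one_div x
  linarith

private lemma log_slope_aux {x y : ℝ} (hx : 1 < x) (hxy : x ≤ y) :
    (x - 1) * Real.log y ≤ (y - 1) * Real.log x := by
  have hx0 : 0 < x := by linarith
  have hy0 : 0 < y := by linarith
  have hyx : Real.log y ≤ Real.log x + (y - x) / x := by
    have h := Real.log_le_sub_one_of_pos (show 0 < y / x by positivity)
    rw [Real.log_div hy0.ne' hx0.ne'] at h
    have h2 : y / x - 1 = (y - x)/x := by field_simp
    linarith
  have hlx : 1 - 1/x ≤ Real.log x := log_ge_one_sub_inv hx0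
  have h1 : (x - 1) * Real.log y ≤ (x-1) * (Real.log x + (y-x)/x) :=
    mul_le_mul_of_nonneg_left hyx (by linarith)
  have h2 : (x-1)*((y-x)/x) ≤ (y - x) * Real.log x := by
    have h3 : (x-1)/x ≤ Real.log x := by
      have h4 : (x-1)/x = 1 - 1/x := by field_simp
      linarith
    calc (x-1)*((y-x)/x) = (y-x) * ((x-1)/x) := by ring
    _ ≤ (y-x) * Real.log x := mul_le_mul_of_nonneg_left h3 (by linarith)
  have h5 : (x-1) * (Real.log x + (y-x)/x) = (x-1)*Real.log x + (x-1)*((y-x)/x) := by ring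
  nlinarith [h1, h2]

/-- **Doubly logarithmic lower bound** (Proposition: lower bound, sublinear rate).
If `log(Δ₀/ε) > max{e²/(b-a)², 1/(b-a)}`, then for any `m ≥ 1` and positive
`ε₀, …, ε_m` with `ε₀ ≤ ε/2` and `ε_m ≥ Δ₀/2`,
`m · ∑_{k=0}^{m-1} ε_{k+1}^a/ε_k^b ≥ (2^{b-a-1}/log(b/a)) · (1/ε^{b-a}) · log(log(Δ₀/ε))`. -/
theorem sublinear_rate_lower_bound (a b ε Δ₀ : ℝ)
    (ha : 0 < a) (hab : a < b) (hε : 0 < ε) (hεΔ : ε < Δ₀)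
    (hbig : Real.log (Δ₀ / ε) >
      max ((Real.exp 1) ^ 2 / (b - a) ^ 2) (1 / (b - a)))
    (m : ℕ) (hm : 1 ≤ m) (eps : ℕ → ℝ)
    (hpos : ∀ k ≤ m, 0 < eps k)
    (h0 : eps 0 ≤ ε / 2) (hM : eps m ≥ Δ₀ / 2) :
    (m : ℝ) * ∑ k ∈ Finset.range m, (eps (k + 1)) ^ a / (eps k) ^ b ≥
      (2 : ℝ) ^ (b - a - 1) / Real.log (b / a) * (1 / ε ^ (b - a)) *
        Real.log (Real.log (Δ₀ / ε)) := by
  have hb : 0 < b := ha.trans hab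
  have hba : 0 < b - a := sub_pos.2 hab
  have hΔ : 0 < Δ₀ := hε.trans hεΔ
  set L : ℝ := Real.log (Δ₀ / ε) with hLdef
  have hL : 0 < L := Real.log_pos ((one_lt_div hε).2 hεΔ)
  set q : ℝ := b / a with hqdef
  have hq1 : 1 < q := (one_lt_div ha).2 hab
  have hq0 : 0 < q := by linarith
  set c : ℝ := Real.log q with hcdef
  have hc : 0 < c := Real.log_pos hq1
  set Λ : ℝ := Real.log L with hΛdef
  set δ : ℝ := ε / 2 with hδdef
  have hδ0 : 0 < δ := by positivity
  set u : ℕ → ℝ := fun k => eps k / δ with hudef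
  have hu : ∀ k, k ≤ m → 0 < u k := fun k hk => div_pos (hpos k hk) hδ0
  set t : ℕ → ℝ := fun k => u (k+1) ^ a / u k ^ b with htdef
  set S : ℝ := ∑ k ∈ Finset.range m, t k with hSdef
  have htpos : ∀ k, k < m → 0 < t k := fun k hk =>
    div_pos (Real.rpow_pos_of_pos (hu (k+1) hk) a) (Real.rpow_pos_of_pos (hu k hk.le) b)
  have hS0 : 0 < S :=
    Finset.sum_pos (fun k hk => htpos k (Finset.mem_range.1 hk)) ⟨0, Finset.mem_range.2 hm⟩
  have htS : ∀ k, k < m → t k ≤ S := fun k hk =>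
    Finset.single_le_sum (fun i hi => (htpos i (Finset.mem_range.1 hi)).le) (Finset.mem_range.2 hk)
  have hqa : q * a = b := div_mul_cancel₀ b ha.ne'
  have hrec : ∀ k, k < m → a * Real.log (u (k+1)) = Real.log (t k) + b * Real.log (u k) := by
    intro k hk
    have h1 : Real.log (t k) = a * Real.log (u (k+1)) - b * Real.log (u k) := by
      show Real.log (u (k+1) ^ a / u k ^ b) = _
      rw [Real.log_div (Real.rpow_pos_of_pos (hu (k+1) hk) a).ne'
        (Real.rpow_pos_of_pos (hu k hk.le) b).ne',
        Real.log_rpow (hu (k+1) hk), Real.log_rpow (hu k hk.le)]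
    linarith
  have hE : (0:ℝ) < Real.exp 1 := Real.exp_pos 1
  -- induction Q : uniform log S bound
  have hQ : ∀ n, n ≤ m → a * Real.log (u n) ≤
      q ^ n * (a * Real.log (u 0)) + (∑ k ∈ Finset.range n, q ^ k) * Real.log S := by
    intro n
    induction n with
    | zero => intro _; simp
    | succ n ih =>
      intro hn1
      have hn : n < m := Nat.lt_of_succ_le hn1
      have ihn := ih hn.le
      have hlogt : Real.log (t n) ≤ Real.log S := Real.log_le_log (htpos n hn) (htS n hn)
      calc a * Real.log (u (n+1)) = Real.log (t n) + q * (a * Real.log (u n)) := by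
            rw [hrec n hn, ← hqa]; ring
      _ ≤ Real.log S + q * (q ^ n * (a * Real.log (u 0)) +
            (∑ k ∈ Finset.range n, q ^ k) * Real.log S) :=
            add_le_add hlogt (mul_le_mul_of_nonneg_left ihn hq0.le)
      _ = q ^ (n+1) * (a * Real.log (u 0)) +
            ((q * ∑ k ∈ Finset.range n, q ^ k) + 1) * Real.log S := by ring
      _ = _ := by rw [geom_sum_succ]
  -- induction P : weighted t/e bound
  have hP : ∀ n, n ≤ m → q * (a * Real.log (u n)) ≤
      q ^ (n+1) * (a * Real.log (u 0)) + q ^ n * ((∑ k ∈ Finset.range n, t k) / Real.exp 1) := by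
    intro n
    induction n with
    | zero => intro _; simp [pow_one]
    | succ n ih =>
      intro hn1
      have hn : n < m := Nat.lt_of_succ_le hn1
      have ihn := ih hn.le
      have hlt : Real.log (t n) ≤ t n / Real.exp 1 := by
        have h := Real.log_le_sub_one_of_pos (div_pos (htpos n hn) hE)
        rw [Real.log_div (htpos n hn).ne' (Real.exp_ne_zero 1), Real.log_exp] at h
        linarith
      have h1n : (1:ℝ) ≤ q ^ n := one_le_pow₀ hq1.le
      have hlt2 : Real.log (t n) ≤ q ^ n * (t n / Real.exp 1) := by
        have : t n / Real.exp 1 ≤ q ^ n * (t n / Real.exp 1) :=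
          le_mul_of_one_le_left (div_nonneg (htpos n hn).le hE.le) h1n
        linarith
      calc q * (a * Real.log (u (n+1)))
          = q * Real.log (t n) + q * (q * (a * Real.log (u n))) := by
            rw [hrec n hn, ← hqa]; ring
      _ ≤ q * (q ^ n * (t n / Real.exp 1)) +
            q * (q ^ (n+1) * (a * Real.log (u 0)) +
              q ^ n * ((∑ k ∈ Finset.range n, t k) / Real.exp 1)) :=
            add_le_add (mul_le_mul_of_nonneg_left hlt2 hq0.le)
              (mul_le_mul_of_nonneg_left ihn hq0.le)
      _ = q ^ (n+1+1) * (a * Real.log (u 0)) +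
            q ^ (n+1) * (((∑ k ∈ Finset.range n, t k) + t n) / Real.exp 1) := by ring
      _ = _ := by rw [Finset.sum_range_succ]
  have hum : Δ₀ / ε ≤ u m := by
    have h1 : Δ₀ / ε = (Δ₀/2) / δ := by rw [hδdef]; field_simp
    rw [h1]
    show Δ₀ / 2 / δ ≤ eps m / δ
    gcongr
  have hLum : L ≤ Real.log (u m) := by
    rw [hLdef]; exact Real.log_le_log (div_pos hΔ hε) hum
  have hu0 : Real.log (u 0) ≤ 0 := by
    apply Real.log_nonpos (le_of_lt (hu 0 (Nat.zero_le m)))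
    show eps 0 / δ ≤ 1
    rw [div_le_one hδ0]; exact h0
  have hW : 0 < ∑ k ∈ Finset.range m, q ^ k :=
    Finset.sum_pos (fun k _ => pow_pos hq0 k) ⟨0, Finset.mem_range.2 hm⟩
  have hlogS : 0 < Real.log S := by
    have h1 := hQ m le_rfl
    have h2 : a * L ≤ a * Real.log (u m) := mul_le_mul_of_nonneg_left hLum ha.le
    have h3 : q ^ m * (a * Real.log (u 0)) ≤ 0 :=
      mul_nonpos_of_nonneg_of_nonpos (pow_pos hq0 m).le
        (mul_nonpos_of_nonneg_of_nonpos ha.le hu0)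
    by_contra hcon
    push_neg at hcon
    linarith only [h1, h2, h3, mul_nonpos_of_nonneg_of_nonpos hW.le hcon, mul_pos ha hL]
  have hS1 : 1 < S := by
    have h := Real.exp_lt_exp.2 hlogS
    rwa [Real.exp_zero, Real.exp_log hS0] at h
  have hkey : Real.exp 1 * b * L ≤ q ^ m * S := by
    have h1 := hP m le_rfl
    have h2 : q * (a * L) ≤ q * (a * Real.log (u m)) :=
      mul_le_mul_of_nonneg_left (mul_le_mul_of_nonneg_left hLum ha.le) hq0.le
    have h3 : q ^ (m+1) * (a * Real.log (u 0)) ≤ 0 :=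
      mul_nonpos_of_nonneg_of_nonpos (pow_pos hq0 (m+1)).le
        (mul_nonpos_of_nonneg_of_nonpos ha.le hu0)
    have h4 : q * (a * L) ≤ q ^ m * (S / Real.exp 1) := by
      rw [hSdef]; linarith
    calc Real.exp 1 * b * L = (q * (a * L)) * Real.exp 1 := by rw [← hqa]; ring
    _ ≤ (q ^ m * (S / Real.exp 1)) * Real.exp 1 := mul_le_mul_of_nonneg_right h4 hE.le
    _ = q ^ m * S := by field_simp
  set M : ℝ := Λ / (2 * c) with hMdef
  have hqm_exp : q ^ m = Real.exp ((m:ℝ) * c) := by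
    rw [← Real.exp_log (pow_pos hq0 m), Real.log_pow]
  have he1 : (1:ℝ) ≤ Real.exp 1 := by
    have := Real.add_one_le_exp 1; linarith
  have main : M ≤ (m:ℝ) * S := by
    by_contra hcon
    push_neg at hcon
    have hm1 : (1:ℝ) ≤ (m:ℝ) := by exact_mod_cast hm
    have hm0 : (0:ℝ) < (m:ℝ) := by linarith only [hm1]
    have hmS : (m:ℝ) ≤ (m:ℝ) * S := le_mul_of_one_le_right hm0.le hS1.le
    have hmM : (m:ℝ) < M := lt_of_le_of_lt hmS hcon
    have hM1 : 1 < M := lt_of_le_of_lt hm1 hmM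
    have hM0 : 0 < M := by linarith only [hM1]
    have hΛpos : 0 < Λ := by
      have h : Λ = M * (2*c) := by rw [hMdef]; field_simp
      rw [h]; positivity
    set σ : ℝ := Real.exp (Λ / 2) with hσdef
    have hσ : 0 < σ := Real.exp_pos _
    have hσsq : σ * σ = L := by
      rw [hσdef, ← Real.exp_add, show Λ/2 + Λ/2 = Λ by ring, hΛdef, Real.exp_log hL]
    have hbσ : Real.exp 1 < (b - a) * σ := by
      have h1 : Real.exp 1 ^ 2 / (b-a)^2 < L := lt_of_le_of_lt (le_max_left _ _) hbig
      have h2 : Real.exp 1 ^ 2 < ((b-a) * σ) ^ 2 := by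
        have h3 : Real.exp 1 ^ 2 < L * (b-a)^2 := (div_lt_iff₀ (by positivity)).1 h1
        calc Real.exp 1 ^ 2 < L * (b-a)^2 := h3
        _ = ((b-a)*σ)^2 := by rw [← hσsq]; ring
      exact lt_of_pow_lt_pow_left₀ 2 (by positivity) h2
    have hqσ : q ≤ σ := by
      have h1 : c < Λ / 2 := by
        have h2 : 1 < Λ / (2*c) := hM1
        have h3 : 1 * (2*c) < Λ := (lt_div_iff₀ (by positivity)).1 h2
        linarith only [h3]
      calc q = Real.exp c := (Real.exp_log hq0).symm
      _ ≤ Real.exp (Λ/2) := Real.exp_le_exp.2 h1.le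
      _ = σ := rfl
    have hslope : (q - 1) * (Λ/2) ≤ σ * c := by
      have h1 := log_slope_aux hq1 hqσ
      rw [hσdef, Real.log_exp] at h1
      linarith only [h1, hc]
    have hk1 : (b - a) * Λ ≤ 2 * (a * (σ * c)) := by
      have h2 : ((q - 1) * (Λ/2)) * (2*a) ≤ (σ*c) * (2*a) :=
        mul_le_mul_of_nonneg_right hslope (by positivity)
      have h3 : ((q-1) * (Λ/2)) * (2*a) = (b - a) * Λ := by
        rw [hqdef]; field_simp
      linarith only [h2, h3]
    have heaL : Real.exp 1 * Real.exp 1 * M < Real.exp 1 * (a * L) := by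
      have k2 : M ≤ a * σ / (b - a) := by
        rw [hMdef, div_le_div_iff₀ (by positivity) hba]
        linarith only [hk1]
      have hd2 : Real.exp 1 / (b-a) < σ := (div_lt_iff₀ hba).2 (by linarith only [hbσ])
      have k3 : Real.exp 1 * Real.exp 1 * (a * σ / (b-a)) < Real.exp 1 * (a*L) := by
        calc Real.exp 1 * Real.exp 1 * (a*σ/(b-a))
            = (Real.exp 1 * (a*σ)) * (Real.exp 1/(b-a)) := by ring
        _ < (Real.exp 1 * (a*σ)) * σ := mul_lt_mul_of_pos_left hd2 (by positivity)
        _ = Real.exp 1 * (a * L) := by rw [← hσsq]; ring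
      calc Real.exp 1 * Real.exp 1 * M ≤ Real.exp 1 * Real.exp 1 * (a*σ/(b-a)) :=
            mul_le_mul_of_nonneg_left k2 (by positivity)
      _ < _ := k3
    have hee : (1:ℝ) ≤ Real.exp 1 * Real.exp 1 := by nlinarith only [he1]
    rcases le_or_gt (c * (m:ℝ)) 1 with h1 | h1
    · -- branch 1 : small c*m
      have hinv : c ≤ 1 / (m:ℝ) := by rw [le_div_iff₀ hm0]; linarith only [h1]
      have hlogm : 1 - 1/(m:ℝ) ≤ Real.log (m:ℝ) := log_ge_one_sub_inv hm0
      have h2 : c * ((m:ℝ) - 1) ≤ 1 - 1/(m:ℝ) := by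
        have h3 := mul_le_mul_of_nonneg_right hinv (by linarith only [hm1] : (0:ℝ) ≤ (m:ℝ) - 1)
        have h4 : (1/(m:ℝ)) * ((m:ℝ)-1) = 1 - 1/(m:ℝ) := by field_simp
        linarith only [h3, h4]
      have h4 : Real.exp ((m:ℝ)*c - c) ≤ (m:ℝ) := by
        calc Real.exp ((m:ℝ)*c - c) ≤ Real.exp (Real.log (m:ℝ)) :=
              Real.exp_le_exp.2 (by linarith only [h2, hlogm])
        _ = (m:ℝ) := Real.exp_log hm0
      have hqm : q ^ m ≤ q * (m:ℝ) := by
        calc q ^ m = Real.exp ((m:ℝ)*c - c) * Real.exp c := by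
              rw [← Real.exp_add, hqm_exp]; ring_nf
        _ ≤ (m:ℝ) * Real.exp c := mul_le_mul_of_nonneg_right h4 (Real.exp_pos c).le
        _ = q * (m:ℝ) := by rw [hcdef, Real.exp_log hq0]; ring
      have h5 : q * (Real.exp 1 * (a*L)) ≤ q * ((m:ℝ) * S) := by
        calc q * (Real.exp 1 * (a*L)) = Real.exp 1 * b * L := by rw [← hqa]; ring
        _ ≤ q ^ m * S := hkey
        _ ≤ (q * (m:ℝ)) * S := mul_le_mul_of_nonneg_right hqm hS0.le
        _ = q * ((m:ℝ) * S) := by ring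
      have h6 : Real.exp 1 * (a*L) ≤ (m:ℝ) * S := (mul_le_mul_iff_right₀ hq0).1 h5
      linarith only [heaL, h6, hcon, mul_le_mul_of_nonneg_right hee hM0.le]
    · -- branch 2 : large c*m
      have hinv : 1/(m:ℝ) ≤ c := by rw [div_le_iff₀ hm0]; linarith only [h1]
      have hMq : M * q ^ m ≤ (m:ℝ) * σ := by
        have hlog1 : Real.log (M / (m:ℝ)) ≤ M/(m:ℝ) - 1 :=
          Real.log_le_sub_one_of_pos (by positivity)
        have h3 : M/(m:ℝ) - 1 = (M - (m:ℝ)) * (1/(m:ℝ)) := by field_simp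
        have h4 : (M - (m:ℝ)) * (1/(m:ℝ)) ≤ (M - (m:ℝ)) * c :=
          mul_le_mul_of_nonneg_left hinv (by linarith only [hmM] : (0:ℝ) ≤ M - (m:ℝ))
        have h5 : M / (m:ℝ) ≤ Real.exp (c * (M - (m:ℝ))) := by
          calc M/(m:ℝ) = Real.exp (Real.log (M/(m:ℝ))) := (Real.exp_log (by positivity)).symm
          _ ≤ Real.exp (c*(M-(m:ℝ))) := Real.exp_le_exp.2 (by linarith only [hlog1, h3, h4])
        have hcM : c * M = Λ/2 := by rw [hMdef]; field_simp
        have h6 : Real.exp (c * (M - (m:ℝ))) = σ / q ^ m := by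
          rw [hσdef, hqm_exp, ← Real.exp_sub]
          congr 1
          rw [mul_sub, hcM]; ring
        rw [h6] at h5
        have h7 := (div_le_div_iff₀ hm0 (pow_pos hq0 m)).1 h5
        linarith only [h7]
      have s3 : σ * (M * (Real.exp 1 * b * σ)) ≤ σ * ((m:ℝ) * S) := by
        calc σ * (M * (Real.exp 1 * b * σ)) = M * (Real.exp 1 * b * (σ*σ)) := by ring
        _ = M * (Real.exp 1 * b * L) := by rw [hσsq]
        _ ≤ M * (q ^ m * S) := mul_le_mul_of_nonneg_left hkey hM0.le
        _ = (M * q ^ m) * S := by ring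
        _ ≤ ((m:ℝ) * σ) * S := mul_le_mul_of_nonneg_right hMq hS0.le
        _ = σ * ((m:ℝ) * S) := by ring
      have s4 : M * (Real.exp 1 * b * σ) ≤ (m:ℝ) * S := (mul_le_mul_iff_right₀ hσ).1 s3
      have hbσ2 : Real.exp 1 ≤ b * σ := by linarith only [hbσ, mul_pos ha hσ]
      linarith only [s4, hcon, mul_le_mul_of_nonneg_right hee hM0.le,
        mul_le_mul_of_nonneg_left hbσ2 (by positivity : (0:ℝ) ≤ M * Real.exp 1)]
  -- final algebra
  have hδab : 0 < δ ^ (a - b) := Real.rpow_pos_of_pos hδ0 _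
  have hterm : ∀ k ∈ Finset.range m, eps (k+1) ^ a / eps k ^ b = δ ^ (a - b) * t k := by
    intro k hk
    have hk' := Finset.mem_range.1 hk
    have hu1 : 0 < u (k+1) := hu _ hk'
    have hu2 : 0 < u k := hu _ hk'.le
    have he1' : eps (k+1) = δ * u (k+1) := by
      show eps (k+1) = δ * (eps (k+1) / δ); field_simp
    have he2' : eps k = δ * u k := by
      show eps k = δ * (eps k / δ); field_simp
    rw [he1', he2', Real.mul_rpow hδ0.le hu1.le, Real.mul_rpow hδ0.le hu2.le,
      Real.rpow_sub hδ0]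
    show _ = δ ^ a / δ ^ b * (u (k+1) ^ a / u k ^ b)
    rw [div_mul_div_comm]
  have hLHS : ∑ k ∈ Finset.range m, eps (k+1) ^ a / eps k ^ b = δ ^ (a-b) * S := by
    rw [hSdef, Finset.mul_sum]; exact Finset.sum_congr rfl hterm
  have hRHS : (2:ℝ) ^ (b - a - 1) / c * (1 / ε ^ (b-a)) * Λ = δ ^ (a-b) * M := by
    have h2a : (2:ℝ) ^ (b - a - 1) = (2:ℝ)^b / (2:ℝ)^a / 2 := by
      rw [Real.rpow_sub two_pos, Real.rpow_sub two_pos, Real.rpow_one]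
    have h2b : ε ^ (b - a) = ε^b / ε^a := Real.rpow_sub hε b a
    have h2c : δ ^ (a - b) = (ε^a/(2:ℝ)^a) / (ε^b/(2:ℝ)^b) := by
      rw [Real.rpow_sub hδ0, hδdef, Real.div_rpow hε.le (by norm_num : (0:ℝ) ≤ 2),
        Real.div_rpow hε.le (by norm_num : (0:ℝ) ≤ 2)]
    have p1 : (0:ℝ) < ε^a := Real.rpow_pos_of_pos hε a
    have p2 : (0:ℝ) < ε^b := Real.rpow_pos_of_pos hε b
    have p3 : (0:ℝ) < (2:ℝ)^a := Real.rpow_pos_of_pos two_pos a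
    have p4 : (0:ℝ) < (2:ℝ)^b := Real.rpow_pos_of_pos two_pos b
    rw [h2a, h2b, h2c, hMdef]
    field_simp
  rw [ge_iff_le]
  calc (2:ℝ) ^ (b - a - 1) / c * (1 / ε ^ (b-a)) * Λ = δ ^ (a-b) * M := hRHS
  _ ≤ δ ^ (a-b) * ((m:ℝ) * S) := mul_le_mul_of_nonneg_left main hδab.le
  _ = (m:ℝ) * (δ ^ (a-b) * S) := by ring
  _ = (m:ℝ) * ∑ k ∈ Finset.range m, eps (k+1) ^ a / eps k ^ b := by rw [hLHS]
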